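/- (von Neumann–Fan trace inequality.) Let X and Y be n×n complex matrices, and let σ₁(X) ≥ ⋯ ≥ σₙ(X) and σ₁(Y) ≥ ⋯ ≥ σₙ(Y) be their singular values in non-increasing order. Then for all n×n unitary matrices W and V, |tr(W X V Y)| ≤ Σᵢ σᵢ(X)·σᵢ(Y); moreover the supremum of |tr(W X V Y)| over all unitary W, V equals Σᵢ σᵢ(X)·σᵢ(Y). -/

import Mathlib

open Matrix ComplexOrder

section VNAux
open Finset


lemma vn_telescope (f : ℕ → ℝ) (m n : ℕ) (h : m ≤ n) :
    ∑ k ∈ Finset.Ico m n, (f k - f (k+1)) = f m - f n := by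
  rw [Finset.sum_Ico_eq_sub _ h, Finset.sum_range_sub' f, Finset.sum_range_sub' f]
  ring

lemma vn_swap4 (R : Finset ℕ) (G : ℕ → ℕ → ℕ → ℕ → ℝ) :
    ∑ i ∈ R, ∑ j ∈ R, ∑ k ∈ R, ∑ l ∈ R, G i j k l
      = ∑ k ∈ R, ∑ l ∈ R, ∑ i ∈ R, ∑ j ∈ R, G i j k l := by
  have h1 : ∀ i ∈ R, ∑ j ∈ R, ∑ k ∈ R, ∑ l ∈ R, G i j k l
      = ∑ k ∈ R, ∑ j ∈ R, ∑ l ∈ R, G i j k l := fun i _ => Finset.sum_comm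
  rw [Finset.sum_congr rfl h1, Finset.sum_comm]
  refine Finset.sum_congr rfl fun k _ => ?_
  have h2 : ∀ i ∈ R, ∑ j ∈ R, ∑ l ∈ R, G i j k l
      = ∑ l ∈ R, ∑ j ∈ R, G i j k l := fun i _ => Finset.sum_comm
  rw [Finset.sum_congr rfl h2, Finset.sum_comm]

lemma vn_swap3 (R : Finset ℕ) (G : ℕ → ℕ → ℕ → ℝ) :
    ∑ i ∈ R, ∑ k ∈ R, ∑ l ∈ R, G i k l
      = ∑ k ∈ R, ∑ l ∈ R, ∑ i ∈ R, G i k l := by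
  rw [Finset.sum_comm]
  exact Finset.sum_congr rfl fun k _ => Finset.sum_comm

lemma vn_card_ite (n m : ℕ) (hm : m < n) :
    ∑ i ∈ Finset.range n, (if i ≤ m then (1:ℝ) else 0) = m + 1 := by
  rw [Finset.sum_ite, Finset.sum_const_zero, add_zero, Finset.sum_const]
  have : (Finset.range n).filter (fun i => i ≤ m) = Finset.range (m+1) := by
    ext i; simp only [Finset.mem_filter, Finset.mem_range]; omega
  rw [this, Finset.card_range]
  simp

lemma vn_core (n : ℕ) (M : ℕ → ℕ → ℝ) (a b : ℕ → ℝ)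
    (hM : ∀ i j, 0 ≤ M i j)
    (hrow : ∀ i, ∑ j ∈ Finset.range n, M i j ≤ 1)
    (hcol : ∀ j, ∑ i ∈ Finset.range n, M i j ≤ 1)
    (ha : Antitone a) (hb : Antitone b)
    (han : a n = 0) (hbn : b n = 0) :
    ∑ i ∈ Finset.range n, ∑ j ∈ Finset.range n, M i j * a j * b i
      ≤ ∑ i ∈ Finset.range n, a i * b i := by
  have hδa0 : ∀ k, 0 ≤ a k - a (k+1) := fun k => sub_nonneg.2 (ha (Nat.le_succ k))
  have hδb0 : ∀ k, 0 ≤ b k - b (k+1) := fun k => sub_nonneg.2 (hb (Nat.le_succ k))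
  have key : ∀ (c : ℕ → ℝ), c n = 0 →
      ∀ j < n, c j = ∑ k ∈ Finset.range n, if j ≤ k then c k - c (k+1) else 0 := by
    intro c hcn j hj
    rw [Finset.sum_ite, Finset.sum_const_zero, add_zero]
    have hfil : (Finset.range n).filter (fun k => j ≤ k) = Finset.Ico j n := by
      ext k; simp only [Finset.mem_Ico, Finset.mem_filter, Finset.mem_range]; omega
    rw [hfil, vn_telescope c j n hj.le, hcn, sub_zero]
  -- four-fold expansion of the LHS
  have expandL : ∑ i ∈ Finset.range n, ∑ j ∈ Finset.range n, M i j * a j * b i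
      = ∑ k ∈ Finset.range n, ∑ l ∈ Finset.range n, ∑ i ∈ Finset.range n,
          ∑ j ∈ Finset.range n,
          (if j ≤ k then a k - a (k+1) else 0) * (if i ≤ l then b l - b (l+1) else 0)
            * M i j := by
    rw [← vn_swap4]
    refine Finset.sum_congr rfl fun i hi => Finset.sum_congr rfl fun j hj => ?_
    rw [show M i j * a j * b i = a j * b i * M i j from by ring,
      key a han j (Finset.mem_range.1 hj), key b hbn i (Finset.mem_range.1 hi),
      Finset.sum_mul_sum, Finset.sum_mul]
    exact Finset.sum_congr rfl fun k _ => by rw [Finset.sum_mul]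
  -- three-fold expansion of the RHS
  have expandR : ∑ i ∈ Finset.range n, a i * b i
      = ∑ k ∈ Finset.range n, ∑ l ∈ Finset.range n, ∑ i ∈ Finset.range n,
          (if i ≤ k then a k - a (k+1) else 0) * (if i ≤ l then b l - b (l+1) else 0) := by
    rw [← vn_swap3]
    refine Finset.sum_congr rfl fun i hi => ?_
    rw [key a han i (Finset.mem_range.1 hi), key b hbn i (Finset.mem_range.1 hi),
      Finset.sum_mul_sum]
  rw [expandL, expandR]
  refine Finset.sum_le_sum fun k hk => Finset.sum_le_sum fun l hl => ?_
  -- reduce to counting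
  have hkn := Finset.mem_range.1 hk
  have hln := Finset.mem_range.1 hl
  have factorL : ∑ i ∈ Finset.range n, ∑ j ∈ Finset.range n,
      (if j ≤ k then a k - a (k+1) else 0) * (if i ≤ l then b l - b (l+1) else 0) * M i j
      = (a k - a (k+1)) * (b l - b (l+1)) *
        ∑ i ∈ Finset.range n, ∑ j ∈ Finset.range n,
          (if j ≤ k then (1:ℝ) else 0) * (if i ≤ l then (1:ℝ) else 0) * M i j := by
    rw [Finset.mul_sum]
    refine Finset.sum_congr rfl fun i _ => ?_
    rw [Finset.mul_sum]
    refine Finset.sum_congr rfl fun j _ => ?_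
    by_cases h1 : j ≤ k <;> by_cases h2 : i ≤ l <;> simp [h1, h2] <;> ring
  have factorR : ∑ i ∈ Finset.range n,
      (if i ≤ k then a k - a (k+1) else 0) * (if i ≤ l then b l - b (l+1) else 0)
      = (a k - a (k+1)) * (b l - b (l+1)) *
        ∑ i ∈ Finset.range n, (if i ≤ k then (1:ℝ) else 0) * (if i ≤ l then (1:ℝ) else 0) := by
    rw [Finset.mul_sum]
    refine Finset.sum_congr rfl fun i _ => ?_
    by_cases h1 : i ≤ k <;> by_cases h2 : i ≤ l <;> simp [h1, h2] <;> ring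
  rw [factorL, factorR]
  refine mul_le_mul_of_nonneg_left ?_ (mul_nonneg (hδa0 k) (hδb0 l))
  -- T ≤ N
  have hN : ∑ i ∈ Finset.range n, (if i ≤ k then (1:ℝ) else 0) * (if i ≤ l then (1:ℝ) else 0)
      = min k l + 1 := by
    have : ∀ i, (if i ≤ k then (1:ℝ) else 0) * (if i ≤ l then (1:ℝ) else 0)
        = if i ≤ min k l then (1:ℝ) else 0 := by
      intro i
      by_cases h1 : i ≤ k <;> by_cases h2 : i ≤ l <;>
        simp [h1, h2, le_min_iff] <;> omega
    rw [Finset.sum_congr rfl fun i _ => this i, vn_card_ite n (min k l) (by omega)]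
  rw [hN]
  have hTl : ∑ i ∈ Finset.range n, ∑ j ∈ Finset.range n,
      (if j ≤ k then (1:ℝ) else 0) * (if i ≤ l then (1:ℝ) else 0) * M i j ≤ l + 1 := by
    calc ∑ i ∈ Finset.range n, ∑ j ∈ Finset.range n,
          (if j ≤ k then (1:ℝ) else 0) * (if i ≤ l then (1:ℝ) else 0) * M i j
        ≤ ∑ i ∈ Finset.range n, (if i ≤ l then (1:ℝ) else 0) := by
          refine Finset.sum_le_sum fun i _ => ?_
          by_cases h2 : i ≤ l
          · simp only [h2, if_true]
            calc ∑ j ∈ Finset.range n, (if j ≤ k then (1:ℝ) else 0) * 1 * M i j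
                ≤ ∑ j ∈ Finset.range n, M i j := by
                  refine Finset.sum_le_sum fun j _ => ?_
                  by_cases h1 : j ≤ k <;> simp [h1, hM i j]
              _ ≤ 1 := hrow i
          · simp [h2]
      _ = l + 1 := vn_card_ite n l hln
  have hTk : ∑ i ∈ Finset.range n, ∑ j ∈ Finset.range n,
      (if j ≤ k then (1:ℝ) else 0) * (if i ≤ l then (1:ℝ) else 0) * M i j ≤ k + 1 := by
    rw [Finset.sum_comm]
    calc ∑ j ∈ Finset.range n, ∑ i ∈ Finset.range n,
          (if j ≤ k then (1:ℝ) else 0) * (if i ≤ l then (1:ℝ) else 0) * M i j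
        ≤ ∑ j ∈ Finset.range n, (if j ≤ k then (1:ℝ) else 0) := by
          refine Finset.sum_le_sum fun j _ => ?_
          by_cases h1 : j ≤ k
          · simp only [h1, if_true]
            calc ∑ i ∈ Finset.range n, 1 * (if i ≤ l then (1:ℝ) else 0) * M i j
                ≤ ∑ i ∈ Finset.range n, M i j := by
                  refine Finset.sum_le_sum fun i _ => ?_
                  by_cases h2 : i ≤ l <;> simp [h2, hM i j]
              _ ≤ 1 := hcol j
          · simp [h1]
      _ = k + 1 := vn_card_ite n k hkn
  rcases le_total k l with h | h
  · have hm : k ⊓ l = k := inf_eq_left.2 h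
    rw [hm]; exact hTk
  · have hm : k ⊓ l = l := inf_eq_right.2 h
    rw [hm]; exact hTl




lemma vn_unitary_completion {n : ℕ} (A B : Matrix (Fin n) (Fin n) ℂ)
    (h : Aᴴ * A = Bᴴ * B) : ∃ U ∈ Matrix.unitaryGroup (Fin n) ℂ, A = U * B := by
  classical
  set fA := Matrix.toEuclideanLin A with hfA
  set fB := Matrix.toEuclideanLin B with hfB
  -- inner products of images
  have hin : ∀ (M : Matrix (Fin n) (Fin n) ℂ) (x y : EuclideanSpace ℂ (Fin n)),
      (inner ℂ (Matrix.toEuclideanLin M x) (Matrix.toEuclideanLin M y) : ℂ)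
        = star (WithLp.equiv 2 (Fin n → ℂ) x) ⬝ᵥ
            ((Mᴴ * M) *ᵥ (WithLp.equiv 2 (Fin n → ℂ) y)) := by
    intro M x y
    rw [PiLp.inner_apply]
    have : ∀ i, (inner ℂ ((Matrix.toEuclideanLin M x) i) ((Matrix.toEuclideanLin M y) i) : ℂ)
        = (star (M *ᵥ WithLp.equiv 2 (Fin n → ℂ) x)) i * (M *ᵥ WithLp.equiv 2 (Fin n → ℂ) y) i := by
      intro i; rw [RCLike.inner_apply']; rfl
    rw [Finset.sum_congr rfl fun i _ => this i]
    have : (star (M *ᵥ WithLp.equiv 2 (Fin n → ℂ) x)) ⬝ᵥ (M *ᵥ WithLp.equiv 2 (Fin n → ℂ) y)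
        = star (WithLp.equiv 2 (Fin n → ℂ) x) ⬝ᵥ ((Mᴴ * M) *ᵥ (WithLp.equiv 2 (Fin n → ℂ) y)) := by
      rw [star_mulVec, ← Matrix.dotProduct_mulVec, Matrix.mulVec_mulVec]
    exact this
  have hinnereq : ∀ x y, (inner ℂ (fA x) (fA y) : ℂ) = inner ℂ (fB x) (fB y) := by
    intro x y; rw [hfA, hfB, hin, hin, h]
  have hnorm : ∀ x, ‖fA x‖ = ‖fB x‖ := by
    intro x
    rw [norm_eq_sqrt_re_inner (𝕜 := ℂ), norm_eq_sqrt_re_inner (𝕜 := ℂ), hinnereq]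
  -- the kernel of fB is contained in that of fA
  have hker : LinearMap.ker fB ≤ LinearMap.ker fA := by
    intro x hx
    rw [LinearMap.mem_ker] at hx ⊢
    have := hnorm x
    rw [hx, norm_zero, norm_eq_zero] at this
    exact this
  set g : ((EuclideanSpace ℂ (Fin n)) ⧸ LinearMap.ker fB) →ₗ[ℂ] EuclideanSpace ℂ (Fin n) :=
    (LinearMap.ker fB).liftQ fA hker with hg
  set f₀ : (LinearMap.range fB) →ₗ[ℂ] EuclideanSpace ℂ (Fin n) :=
    g.comp (fB.quotKerEquivRange.symm.toLinearMap) with hf₀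
  have hf₀app : ∀ x, f₀ ⟨fB x, LinearMap.mem_range_self fB x⟩ = fA x := by
    intro x
    rw [hf₀, LinearMap.comp_apply, LinearEquiv.coe_coe,
      LinearMap.quotKerEquivRange_symm_apply_image, hg]
    exact Submodule.liftQ_apply _ fA x
  have hf₀norm : ∀ v : LinearMap.range fB, ‖f₀ v‖ = ‖v‖ := by
    rintro ⟨-, x, rfl⟩
    rw [hf₀app x]
    exact (hnorm x).trans rfl
  set L : (LinearMap.range fB) →ₗᵢ[ℂ] EuclideanSpace ℂ (Fin n) := ⟨f₀, hf₀norm⟩ with hL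
  set U := L.extend with hUdef
  have hU : ∀ x, U (fB x) = fA x := by
    intro x
    have := L.extend_apply ⟨fB x, LinearMap.mem_range_self fB x⟩
    rw [← hUdef] at this
    rw [this, hL]
    exact hf₀app x
  -- the matrix of U
  set Umat : Matrix (Fin n) (Fin n) ℂ :=
    Matrix.of (fun i j => (U (EuclideanSpace.single j 1)) i) with hUmat
  have hrepr : ∀ x : EuclideanSpace ℂ (Fin n),
      x = ∑ j, (x j) • EuclideanSpace.single j (1:ℂ) := by
    intro x
    have := (EuclideanSpace.basisFun (Fin n) ℂ).sum_repr x
    conv_lhs => rw [← this]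
    exact Finset.sum_congr rfl fun j _ => by
      rw [EuclideanSpace.basisFun_repr, EuclideanSpace.basisFun_apply]
  have hUvec : ∀ x : EuclideanSpace ℂ (Fin n), ∀ i, U x i = (Umat *ᵥ (WithLp.equiv 2 (Fin n → ℂ) x)) i := by
    intro x i
    conv_lhs => rw [hrepr x]
    rw [map_sum]
    have : (∑ j, U (x j • EuclideanSpace.single j 1)) i
        = ∑ j, (U (x j • EuclideanSpace.single j 1)) i := by
      rw [WithLp.ofLp_sum]; exact Finset.sum_apply i Finset.univ _
    rw [this]
    rw [Matrix.mulVec, dotProduct]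
    refine Finset.sum_congr rfl fun j _ => ?_
    rw [_root_.map_smul, PiLp.smul_apply, smul_eq_mul, mul_comm]
    rfl
  -- U is unitary
  have hUunit : Umat ∈ Matrix.unitaryGroup (Fin n) ℂ := by
    rw [Matrix.mem_unitaryGroup_iff']
    ext i j
    rw [Matrix.mul_apply, Matrix.one_apply]
    have : ∀ k, (star Umat) i k * Umat k j
        = (inner ℂ (U (EuclideanSpace.single i 1) k) (U (EuclideanSpace.single j 1) k) : ℂ) := by
      intro k
      rw [hUmat]
      simp only [Matrix.star_apply, Matrix.of_apply]
      rw [RCLike.inner_apply']; rfl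
    rw [Finset.sum_congr rfl fun k _ => this k, ← PiLp.inner_apply,
      U.inner_map_map, EuclideanSpace.inner_single_left]
    simp [EuclideanSpace.single_apply, eq_comm]
  refine ⟨Umat, hUunit, ?_⟩
  -- A = Umat * B via columns
  ext i j
  have hx := hU ((WithLp.equiv 2 (Fin n → ℂ)).symm (Pi.single j 1))
  have hAcol : fA ((WithLp.equiv 2 (Fin n → ℂ)).symm (Pi.single j 1)) =
      (WithLp.equiv 2 (Fin n → ℂ)).symm (A *ᵥ Pi.single j 1) := rfl
  have hBcol : fB ((WithLp.equiv 2 (Fin n → ℂ)).symm (Pi.single j 1)) =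
      (WithLp.equiv 2 (Fin n → ℂ)).symm (B *ᵥ Pi.single j 1) := rfl
  have := hUvec (fB ((WithLp.equiv 2 (Fin n → ℂ)).symm (Pi.single j 1))) i
  rw [hx, hAcol, hBcol] at this
  have hA : ((WithLp.equiv 2 (Fin n → ℂ)).symm (A *ᵥ Pi.single j 1) :
      EuclideanSpace ℂ (Fin n)) i = A i j := by
    rw [Matrix.mulVec_single]
    simp
  have hB : (Umat *ᵥ WithLp.equiv 2 (Fin n → ℂ)
      ((WithLp.equiv 2 (Fin n → ℂ)).symm (B *ᵥ Pi.single j 1))) i = (Umat * B) i j := by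
    rw [Equiv.apply_symm_apply, Matrix.mulVec_mulVec, Matrix.mulVec_single]
    simp
  rw [hA, hB] at this
  exact this



lemma vn_svd {n : ℕ} (X : Matrix (Fin n) (Fin n) ℂ) (σ : Fin n → ℝ)
    (hσ : ∃ e : Equiv.Perm (Fin n), ∀ i, σ i =
      Real.sqrt ((Matrix.posSemidef_conjTranspose_mul_self X).isHermitian.eigenvalues (e i))) :
    ∃ U V : Matrix (Fin n) (Fin n) ℂ, U ∈ Matrix.unitaryGroup (Fin n) ℂ ∧
      V ∈ Matrix.unitaryGroup (Fin n) ℂ ∧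
      X = U * Matrix.diagonal (fun i => (σ i : ℂ)) * V := by
  classical
  obtain ⟨e, he⟩ := hσ
  set hH := (Matrix.posSemidef_conjTranspose_mul_self X)
  set eig := hH.isHermitian.eigenvalues with heig
  set W : Matrix (Fin n) (Fin n) ℂ := (hH.isHermitian.eigenvectorUnitary : Matrix (Fin n) (Fin n) ℂ) with hW
  have hWu : W ∈ Matrix.unitaryGroup (Fin n) ℂ := hH.isHermitian.eigenvectorUnitary.2
  have hspec : Xᴴ * X = W * Matrix.diagonal (RCLike.ofReal ∘ eig) * Wᴴ :=
    hH.isHermitian.spectral_theorem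
  set Q : Matrix (Fin n) (Fin n) ℂ := Matrix.of (fun i j => if e i = j then (1:ℂ) else 0) with hQ
  have hQu : Q ∈ Matrix.unitaryGroup (Fin n) ℂ := by
    rw [Matrix.mem_unitaryGroup_iff]
    ext i j
    rw [Matrix.mul_apply, Finset.sum_eq_single (e i)]
    · simp only [hQ, Matrix.conjTranspose_apply, Matrix.of_apply, if_pos rfl, one_mul,
        apply_ite (star : ℂ → ℂ), star_one, star_zero, Matrix.one_apply,
        EmbeddingLike.apply_eq_iff_eq]
      by_cases hij : i = j
      · simp [hij]
      · simp [hij, Ne.symm hij]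
    · intro k _ hk
      have hne : e i ≠ k := fun hc => hk hc.symm
      simp [hQ, hne]
    · simp
  have hQdiag : ∀ c : Fin n → ℂ, Qᴴ * Matrix.diagonal c * Q
      = Matrix.diagonal (fun i => c (e.symm i)) := by
    intro c
    ext i j
    have h1 : ∀ m, (Qᴴ * Matrix.diagonal c) i m = (if e m = i then (1:ℂ) else 0) * c m := by
      intro m
      rw [Matrix.mul_apply, Finset.sum_eq_single m]
      · rw [Matrix.conjTranspose_apply, Matrix.diagonal_apply_eq, hQ]
        simp only [Matrix.of_apply, apply_ite (star : ℂ → ℂ), star_one, star_zero]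
      · intro k _ hk
        rw [Matrix.diagonal_apply_ne _ hk, mul_zero]
      · simp
    rw [Matrix.mul_apply, Finset.sum_congr rfl fun m _ => by rw [h1 m],
      Finset.sum_eq_single (e.symm i)]
    · rw [hQ]
      simp only [Matrix.of_apply, Equiv.apply_symm_apply, if_pos rfl, one_mul,
        Matrix.diagonal_apply]
      by_cases hij : i = j
      · simp [hij]
      · simp [hij]
    · intro m _ hm
      have : e m ≠ i := fun hc => hm (by rw [← hc]; simp)
      rw [if_neg this, zero_mul, zero_mul]
    · simp
  have hσsq : ∀ i, (σ i : ℂ) * (σ i : ℂ) = (RCLike.ofReal ∘ eig) (e i) := by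
    intro i
    rw [he i]
    have h0 : 0 ≤ eig (e i) := hH.eigenvalues_nonneg (e i)
    rw [← Complex.ofReal_mul, Real.mul_self_sqrt h0]
    rfl
  set V₁ : Matrix (Fin n) (Fin n) ℂ := W * Qᴴ with hV₁
  set B : Matrix (Fin n) (Fin n) ℂ := Matrix.diagonal (fun i => (σ i : ℂ)) * V₁ᴴ with hB
  have hBB : Xᴴ * X = Bᴴ * B := by
    rw [hB, Matrix.conjTranspose_mul, Matrix.conjTranspose_conjTranspose,
      Matrix.diagonal_conjTranspose]
    have hstar : (star fun i => (σ i : ℂ)) = fun i => (σ i : ℂ) := by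
      funext i; simp [Complex.conj_ofReal]
    rw [hstar, hV₁, Matrix.conjTranspose_mul, Matrix.conjTranspose_conjTranspose]
    calc Xᴴ * X = W * Matrix.diagonal (RCLike.ofReal ∘ eig) * Wᴴ := hspec
      _ = W * (Qᴴ * Matrix.diagonal (fun i => (σ i : ℂ) * (σ i : ℂ)) * Q) * Wᴴ := by
          rw [hQdiag, show (fun i => ((σ (e.symm i) : ℂ) * (σ (e.symm i) : ℂ))) = RCLike.ofReal ∘ eig
            from funext fun i => by rw [hσsq (e.symm i)]; simp]
      _ = W * Qᴴ * Matrix.diagonal (fun i => (σ i : ℂ)) *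
            (Matrix.diagonal (fun i => (σ i : ℂ)) * (Q * Wᴴ)) := by
          rw [← Matrix.diagonal_mul_diagonal]
          simp only [Matrix.mul_assoc]
  obtain ⟨U, hUu, hXU⟩ := vn_unitary_completion X B hBB
  have hV₁u : V₁ ∈ Matrix.unitaryGroup (Fin n) ℂ := by
    rw [hV₁]
    exact mul_mem hWu (by
      rw [show Qᴴ = star Q from rfl]
      exact Unitary.star_mem hQu)
  refine ⟨U, V₁ᴴ, hUu, ?_, ?_⟩
  · rw [show V₁ᴴ = star V₁ from rfl]
    exact Unitary.star_mem hV₁u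
  · rw [hXU, hB, Matrix.mul_assoc]


-- row sums of squared moduli of a unitary matrix
lemma vn_row_sq {n : ℕ} (A : Matrix (Fin n) (Fin n) ℂ)
    (hA : A ∈ Matrix.unitaryGroup (Fin n) ℂ) (i : Fin n) :
    ∑ j, (‖A i j‖)^2 = 1 := by
  have h := Matrix.mem_unitaryGroup_iff.1 hA
  have h1 : (A * Aᴴ) i i = 1 := by rw [show Aᴴ = star A from rfl, h]; simp
  rw [Matrix.mul_apply] at h1
  have h2 : ∀ j, A i j * Aᴴ j i = ((‖A i j‖)^2 : ℝ) := by
    intro j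
    rw [Matrix.conjTranspose_apply, RCLike.star_def, Complex.mul_conj, Complex.sq_norm]
  rw [Finset.sum_congr rfl fun j _ => h2 j] at h1
  rw [← Complex.ofReal_sum] at h1
  exact_mod_cast h1

lemma vn_col_sq {n : ℕ} (B : Matrix (Fin n) (Fin n) ℂ)
    (hB : B ∈ Matrix.unitaryGroup (Fin n) ℂ) (i : Fin n) :
    ∑ j, (‖B j i‖)^2 = 1 := by
  have h := Matrix.mem_unitaryGroup_iff'.1 hB
  have h1 : (Bᴴ * B) i i = 1 := by rw [show Bᴴ = star B from rfl, h]; simp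
  rw [Matrix.mul_apply] at h1
  have h2 : ∀ j, Bᴴ i j * B j i = ((‖B j i‖)^2 : ℝ) := by
    intro j
    rw [Matrix.conjTranspose_apply, mul_comm, RCLike.star_def, Complex.mul_conj, Complex.sq_norm]
  rw [Finset.sum_congr rfl fun j _ => h2 j] at h1
  rw [← Complex.ofReal_sum] at h1
  exact_mod_cast h1

lemma vn_diag_bound {n : ℕ} (A B : Matrix (Fin n) (Fin n) ℂ)
    (hA : A ∈ Matrix.unitaryGroup (Fin n) ℂ) (hB : B ∈ Matrix.unitaryGroup (Fin n) ℂ)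
    (a b : Fin n → ℝ) (ha : Antitone a) (hb : Antitone b)
    (ha0 : ∀ i, 0 ≤ a i) (hb0 : ∀ i, 0 ≤ b i) :
    ‖(A * Matrix.diagonal (fun i => (a i : ℂ)) * B *
        Matrix.diagonal (fun i => (b i : ℂ))).trace‖
      ≤ ∑ i, a i * b i := by
  classical
  have htr : (A * Matrix.diagonal (fun i => (a i : ℂ)) * B *
      Matrix.diagonal (fun i => (b i : ℂ))).trace
      = ∑ i, ∑ j, A i j * (a j : ℂ) * B j i * (b i : ℂ) := by
    rw [Matrix.trace]
    refine Finset.sum_congr rfl fun i _ => ?_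
    rw [Matrix.diag_apply, Matrix.mul_diagonal, Matrix.mul_apply, Finset.sum_mul]
    refine Finset.sum_congr rfl fun j _ => ?_
    rw [Matrix.mul_diagonal]
  rw [htr]
  have habs : ‖∑ i, ∑ j, A i j * (a j : ℂ) * B j i * (b i : ℂ)‖
      ≤ ∑ i : Fin n, ∑ j : Fin n,
          (‖A i j‖ * ‖B j i‖) * a j * b i := by
    refine (norm_sum_le _ _).trans ?_
    refine Finset.sum_le_sum fun i _ => ?_
    refine (norm_sum_le _ _).trans ?_
    refine Finset.sum_le_sum fun j _ => ?_
    rw [norm_mul, norm_mul, norm_mul, Complex.norm_real, Complex.norm_real, Real.norm_eq_abs,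
      Real.norm_eq_abs,
      abs_of_nonneg (ha0 j), abs_of_nonneg (hb0 i)]
    ring_nf
    exact le_refl _
  refine habs.trans ?_
  -- transfer to ℕ-indexed sums and apply the core inequality
  set M' : ℕ → ℕ → ℝ := fun i j =>
    if h : i < n ∧ j < n then ‖A ⟨i, h.1⟩ ⟨j, h.2⟩‖ * ‖B ⟨j, h.2⟩ ⟨i, h.1⟩‖
    else 0 with hM'
  set a' : ℕ → ℝ := fun k => if h : k < n then a ⟨k, h⟩ else 0 with ha'
  set b' : ℕ → ℝ := fun k => if h : k < n then b ⟨k, h⟩ else 0 with hb'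
  have hanti : ∀ (c : Fin n → ℝ), Antitone c → (∀ i, 0 ≤ c i) →
      Antitone (fun k => if h : k < n then c ⟨k, h⟩ else 0) := by
    intro c hc hc0 k l hkl
    by_cases hl : l < n
    · have hk : k < n := lt_of_le_of_lt hkl hl
      simp only [dif_pos hl, dif_pos hk]
      exact hc (by exact_mod_cast hkl)
    · by_cases hk : k < n
      · simp only [dif_neg hl, dif_pos hk]
        exact hc0 _
      · simp [dif_neg hl, dif_neg hk]
  have key := vn_core n M' a' b'
    (by
      intro i j
      rw [hM']
      by_cases h : i < n ∧ j < n
      · simp only [dif_pos h]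
        positivity
      · simp [dif_neg h])
    (by
      intro i
      by_cases hi : i < n
      · have hrw : ∑ j ∈ Finset.range n, M' i j
            = ∑ j : Fin n, ‖A ⟨i, hi⟩ j‖ * ‖B j ⟨i, hi⟩‖ := by
          rw [← Fin.sum_univ_eq_sum_range (fun j => M' i j) n]
          refine Finset.sum_congr rfl fun j _ => ?_
          simp only [hM', dif_pos (⟨hi, j.isLt⟩ : i < n ∧ (j : ℕ) < n)]
        rw [hrw]
        have hcs := Finset.sum_mul_sq_le_sq_mul_sq Finset.univ
          (fun j => ‖A ⟨i, hi⟩ j‖) (fun j => ‖B j ⟨i, hi⟩‖)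
        rw [vn_row_sq A hA ⟨i, hi⟩, vn_col_sq B hB ⟨i, hi⟩, one_mul] at hcs
        have hnn : 0 ≤ ∑ j : Fin n, ‖A ⟨i, hi⟩ j‖ * ‖B j ⟨i, hi⟩‖ :=
          Finset.sum_nonneg fun j _ => mul_nonneg (norm_nonneg _) (norm_nonneg _)
        nlinarith
      · have : ∀ j, M' i j = 0 := by
          intro j; simp only [hM', dif_neg (fun h : i < n ∧ j < n => hi h.1)]
        simp [this])
    (by
      intro j
      by_cases hj : j < n
      · have hrw : ∑ i ∈ Finset.range n, M' i j
            = ∑ i : Fin n, ‖A i ⟨j, hj⟩‖ * ‖B ⟨j, hj⟩ i‖ := by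
          rw [← Fin.sum_univ_eq_sum_range (fun i => M' i j) n]
          refine Finset.sum_congr rfl fun i _ => ?_
          simp only [hM', dif_pos (⟨i.isLt, hj⟩ : (i : ℕ) < n ∧ j < n)]
        rw [hrw]
        have hcs := Finset.sum_mul_sq_le_sq_mul_sq Finset.univ
          (fun i => ‖A i ⟨j, hj⟩‖) (fun i => ‖B ⟨j, hj⟩ i‖)
        rw [vn_col_sq A hA ⟨j, hj⟩, vn_row_sq B hB ⟨j, hj⟩, one_mul] at hcs
        have hnn : 0 ≤ ∑ i : Fin n, ‖A i ⟨j, hj⟩‖ * ‖B ⟨j, hj⟩ i‖ :=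
          Finset.sum_nonneg fun i _ => mul_nonneg (norm_nonneg _) (norm_nonneg _)
        nlinarith
      · have : ∀ i, M' i j = 0 := by
          intro i; simp only [hM', dif_neg (fun h : i < n ∧ j < n => hj h.2)]
        simp [this])
    (hanti a ha ha0) (hanti b hb hb0)
    (by simp [ha']) (by simp [hb'])
  calc ∑ i : Fin n, ∑ j : Fin n, ‖A i j‖ * ‖B j i‖ * a j * b i
      = ∑ i ∈ Finset.range n, ∑ j ∈ Finset.range n, M' i j * a' j * b' i := by
        rw [← Fin.sum_univ_eq_sum_range (fun i => ∑ j ∈ Finset.range n, M' i j * a' j * b' i) n]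
        refine Finset.sum_congr rfl fun i _ => ?_
        rw [← Fin.sum_univ_eq_sum_range (fun j => M' (i : ℕ) j * a' j * b' (i : ℕ)) n]
        refine Finset.sum_congr rfl fun j _ => ?_
        simp only [hM', ha', hb', dif_pos (⟨i.isLt, j.isLt⟩ : (i : ℕ) < n ∧ (j : ℕ) < n),
          dif_pos i.isLt, dif_pos j.isLt]
    _ ≤ ∑ i ∈ Finset.range n, a' i * b' i := key
    _ = ∑ i : Fin n, a i * b i := by
        rw [← Fin.sum_univ_eq_sum_range (fun i => a' i * b' i) n]
        exact Finset.sum_congr rfl fun i _ => by simp only [ha', hb', dif_pos i.isLt]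

end VNAux

/-- **von Neumann–Fan trace inequality.** If `σX`, `σY` are the singular values of the
`n×n` complex matrices `X`, `Y` in non-increasing order, then
`|tr(W X V Y)| ≤ ∑ᵢ σᵢ(X)σᵢ(Y)` for all unitaries `W, V`, and the supremum of
`|tr(W X V Y)|` over unitaries `W, V` equals `∑ᵢ σᵢ(X)σᵢ(Y)`. -/
theorem vonNeumann_fan_trace_inequality (n : ℕ) (X Y : Matrix (Fin n) (Fin n) ℂ)
    (σX σY : Fin n → ℝ) (hσXanti : Antitone σX) (hσYanti : Antitone σY)
    (hσX : ∃ e : Equiv.Perm (Fin n), ∀ i, σX i =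
      Real.sqrt ((Matrix.posSemidef_conjTranspose_mul_self X).isHermitian.eigenvalues (e i)))
    (hσY : ∃ e : Equiv.Perm (Fin n), ∀ i, σY i =
      Real.sqrt ((Matrix.posSemidef_conjTranspose_mul_self Y).isHermitian.eigenvalues (e i))) :
    (∀ W V : Matrix (Fin n) (Fin n) ℂ,
      W ∈ Matrix.unitaryGroup (Fin n) ℂ → V ∈ Matrix.unitaryGroup (Fin n) ℂ →
      ‖(W * X * V * Y).trace‖ ≤ ∑ i, σX i * σY i) ∧
    IsLUB {r : ℝ | ∃ W V : Matrix (Fin n) (Fin n) ℂ,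
        W ∈ Matrix.unitaryGroup (Fin n) ℂ ∧ V ∈ Matrix.unitaryGroup (Fin n) ℂ ∧
        r = ‖(W * X * V * Y).trace‖}
      (∑ i, σX i * σY i) := by
  classical
  have hσX0 : ∀ i, 0 ≤ σX i := by
    obtain ⟨e, he⟩ := hσX
    intro i; rw [he i]; exact Real.sqrt_nonneg _
  have hσY0 : ∀ i, 0 ≤ σY i := by
    obtain ⟨e, he⟩ := hσY
    intro i; rw [he i]; exact Real.sqrt_nonneg _
  obtain ⟨Ux, Vx, hUxu, hVxu, hXd⟩ := vn_svd X σX hσX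
  obtain ⟨Uy, Vy, hUyu, hVyu, hYd⟩ := vn_svd Y σY hσY
  set Dx : Matrix (Fin n) (Fin n) ℂ := Matrix.diagonal (fun i => (σX i : ℂ)) with hDx
  set Dy : Matrix (Fin n) (Fin n) ℂ := Matrix.diagonal (fun i => (σY i : ℂ)) with hDy
  -- trace identity
  have htr : ∀ W V : Matrix (Fin n) (Fin n) ℂ,
      (W * X * V * Y).trace = ((Vy * (W * Ux)) * Dx * (Vx * (V * Uy)) * Dy).trace := by
    intro W V
    have h2 : (Vy * (W * Ux)) * Dx * (Vx * (V * Uy)) * Dy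
        = Vy * (W * X * V * (Uy * Dy)) := by
      rw [hXd]; simp only [Matrix.mul_assoc]
    have h1 : W * X * V * Y = (W * X * V * (Uy * Dy)) * Vy := by
      rw [hYd]; simp only [Matrix.mul_assoc]
    rw [h1, h2, Matrix.trace_mul_comm]
  -- part 1: the upper bound
  have hbound : ∀ W V : Matrix (Fin n) (Fin n) ℂ,
      W ∈ Matrix.unitaryGroup (Fin n) ℂ → V ∈ Matrix.unitaryGroup (Fin n) ℂ →
      ‖(W * X * V * Y).trace‖ ≤ ∑ i, σX i * σY i := by
    intro W V hWu hVu
    rw [htr W V]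
    exact vn_diag_bound (Vy * (W * Ux)) (Vx * (V * Uy))
      (mul_mem hVyu (mul_mem hWu hUxu)) (mul_mem hVxu (mul_mem hVu hUyu))
      σX σY hσXanti hσYanti hσX0 hσY0
  refine ⟨hbound, ?_⟩
  -- part 2: the supremum is attained
  set W₀ : Matrix (Fin n) (Fin n) ℂ := star Vy * star Ux with hW₀
  set V₀ : Matrix (Fin n) (Fin n) ℂ := star Vx * star Uy with hV₀
  have hW₀u : W₀ ∈ Matrix.unitaryGroup (Fin n) ℂ :=
    mul_mem (Unitary.star_mem hVyu) (Unitary.star_mem hUxu)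
  have hV₀u : V₀ ∈ Matrix.unitaryGroup (Fin n) ℂ :=
    mul_mem (Unitary.star_mem hVxu) (Unitary.star_mem hUyu)
  have hAone : Vy * (W₀ * Ux) = 1 := by
    have h1 : star Ux * Ux = 1 := Matrix.mem_unitaryGroup_iff'.1 hUxu
    have h2 : Vy * star Vy = 1 := Matrix.mem_unitaryGroup_iff.1 hVyu
    calc Vy * (W₀ * Ux) = Vy * (star Vy * (star Ux * Ux)) := by rw [hW₀, Matrix.mul_assoc]
      _ = 1 := by rw [h1, Matrix.mul_one, h2]
  have hBone : Vx * (V₀ * Uy) = 1 := by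
    have h1 : star Uy * Uy = 1 := Matrix.mem_unitaryGroup_iff'.1 hUyu
    have h2 : Vx * star Vx = 1 := Matrix.mem_unitaryGroup_iff.1 hVxu
    calc Vx * (V₀ * Uy) = Vx * (star Vx * (star Uy * Uy)) := by rw [hV₀, Matrix.mul_assoc]
      _ = 1 := by rw [h1, Matrix.mul_one, h2]
  have hattain : ‖(W₀ * X * V₀ * Y).trace‖ = ∑ i, σX i * σY i := by
    rw [htr W₀ V₀, hAone, hBone, Matrix.one_mul, Matrix.mul_one,
      Matrix.diagonal_mul_diagonal, Matrix.trace_diagonal]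
    have : ∑ i, ((σX i : ℂ) * (σY i : ℂ)) = ((∑ i, σX i * σY i : ℝ) : ℂ) := by
      push_cast; rfl
    rw [this, Complex.norm_real, Real.norm_eq_abs,
      abs_of_nonneg (Finset.sum_nonneg fun i _ => mul_nonneg (hσX0 i) (hσY0 i))]
  refine IsGreatest.isLUB ⟨⟨W₀, V₀, hW₀u, hV₀u, hattain.symm⟩, ?_⟩
  rintro r ⟨W, V, hWu, hVu, rfl⟩
  exact hbound W V hWu hVu
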